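/- (Beck's theorem, fully faithful part.) Let F ⊣ G be an adjunction with F : B ⥤ C and unit η. Then the comparison functor Φ : B ⥤ Coalg(T) to the coalgebras over the induced comonad T on C is fully faithful if and only if for every object H of B the unit morphism η_H : H ⟶ G(F(H)) is a regular monomorphism, i.e., an equalizer of some parallel pair of morphisms. -/

import Mathlib

open CategoryTheory CategoryTheory.Limits

universe v₁ v₂ u₁ u₂

/-- (Beck's theorem, fully faithful part.) For an adjunction `F ⊣ G`, the comparison functor
to the coalgebras over the induced comonad is fully faithful iff every unit morphism
`η_H : H ⟶ G(F(H))` is a regular monomorphism (an equalizer of some parallel pair). -/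
theorem comparison_fullyFaithful_iff_unit_regularMono
    {B : Type u₁} [Category.{v₁} B] {C : Type u₂} [Category.{v₂} C]
    (F : B ⥤ C) (G : C ⥤ B) (adj : F ⊣ G) :
    ((Comonad.comparison adj).Full ∧ (Comonad.comparison adj).Faithful) ↔
      ∀ H : B, Nonempty (RegularMono (adj.unit.app H)) := by
  constructor
  · rintro ⟨full, faithful⟩ H
    haveI : IsSplitMono (F.map (adj.unit.app H)) :=
      ⟨⟨⟨adj.counit.app _, adj.left_triangle_components H⟩⟩⟩
    have monoη : Mono (adj.unit.app H) := by
      constructor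
      intro W a b hab
      apply faithful.map_injective (X := W) (Y := H)
      apply Comonad.Coalgebra.Hom.ext
      simp only [Comonad.comparison_map_f]
      change F.map a = F.map b
      rw [← cancel_mono (F.map (adj.unit.app H)), ← F.map_comp, ← F.map_comp, hab]
    have hw : adj.unit.app H ≫ G.map (F.map (adj.unit.app H))
        = adj.unit.app H ≫ adj.unit.app (G.obj (F.obj H)) := by
      simpa using (adj.unit.naturality (adj.unit.app H)).symm
    refine ⟨{
      Z := G.obj (F.obj (G.obj (F.obj H)))
      left := G.map (F.map (adj.unit.app H))
      right := adj.unit.app (G.obj (F.obj H))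
      w := hw
      isLimit := Fork.IsLimit.mk' _ fun s => ?_ }⟩
    have hcond : s.ι ≫ G.map (F.map (adj.unit.app H))
        = s.ι ≫ adj.unit.app (G.obj (F.obj H)) := s.condition
    have hnat : s.ι ≫ adj.unit.app (G.obj (F.obj H))
        = adj.unit.app s.pt ≫ G.map (F.map s.ι) := by
      simpa using (adj.unit.naturality s.ι).symm
    have h3 : adj.unit.app s.pt ≫ G.map (F.map s.ι) ≫ G.map (adj.counit.app (F.obj H))
        = s.ι := by
      rw [← Category.assoc, ← hnat, Category.assoc, adj.right_triangle_components]
      simp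
    have hε : F.map (G.map (F.map (adj.unit.app H)))
          ≫ adj.counit.app (F.obj (G.obj (F.obj H)))
        = adj.counit.app (F.obj H) ≫ F.map (adj.unit.app H) := by
      simpa using adj.counit.naturality (F.map (adj.unit.app H))
    have hk : F.map (adj.unit.app s.pt)
          ≫ F.map (G.map (F.map s.ι ≫ adj.counit.app (F.obj H)))
        = (F.map s.ι ≫ adj.counit.app (F.obj H)) ≫ F.map (adj.unit.app H) := by
      have h1 : F.map (adj.unit.app s.pt)
            ≫ F.map (G.map (F.map s.ι ≫ adj.counit.app (F.obj H))) = F.map s.ι := by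
        rw [← F.map_comp, G.map_comp, h3]
      have h2 : (F.map s.ι ≫ adj.counit.app (F.obj H)) ≫ F.map (adj.unit.app H)
          = F.map s.ι := by
        rw [Category.assoc, ← hε, ← Category.assoc, ← F.map_comp, hcond, F.map_comp,
          Category.assoc, adj.left_triangle_components (G.obj (F.obj H))]
        simp
      rw [h1, h2]
    have e := full.map_surjective (X := s.pt) (Y := H)
      ⟨F.map s.ι ≫ adj.counit.app (F.obj H), hk⟩
    set l := e.choose with hldef
    have hlf : F.map l = F.map s.ι ≫ adj.counit.app (F.obj H) :=
      congrArg Comonad.Coalgebra.Hom.f e.choose_spec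
    have hfac : l ≫ adj.unit.app H = s.ι := by
      have hln : l ≫ adj.unit.app H = adj.unit.app s.pt ≫ G.map (F.map l) := by
        simpa using adj.unit.naturality l
      rw [hln, hlf, G.map_comp, h3]
    refine ⟨l, hfac, fun {m} hm => ?_⟩
    rw [← cancel_mono (adj.unit.app H)]
    exact hm.trans hfac.symm
  · intro h
    have mono : ∀ X : B, Mono (adj.unit.app X) := fun X => (h X).some.mono
    constructor
    · constructor
      intro H H' k
      dsimp only [Comonad.comparison] at k ⊢
      obtain ⟨rm⟩ := h H'
      have hk := k.h
      simp only [Comonad.comparison_obj_A, Comonad.comparison_obj_a,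
        Adjunction.toComonad_coe, Functor.comp_map] at hk
      change F.map (adj.unit.app H) ≫ F.map (G.map k.f) = k.f ≫ F.map (adj.unit.app H') at hk
      have hcan : (adj.unit.app H ≫ G.map k.f) ≫ G.map (F.map (adj.unit.app H'))
          = (adj.unit.app H ≫ G.map k.f) ≫ adj.unit.app (G.obj (F.obj H')) := by
        have h1 : adj.unit.app H ≫ G.map (F.map (adj.unit.app H))
            = adj.unit.app H ≫ adj.unit.app (G.obj (F.obj H)) := by
          simpa using (adj.unit.naturality (adj.unit.app H)).symm
        have h2 : G.map k.f ≫ adj.unit.app (G.obj (F.obj H'))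
            = adj.unit.app (G.obj (F.obj H)) ≫ G.map (F.map (G.map k.f)) := by
          simpa using (adj.unit.naturality (G.map k.f)).symm
        rw [Category.assoc, ← G.map_comp, ← hk, G.map_comp, ← Category.assoc, h1,
          Category.assoc, Category.assoc, h2, ← Category.assoc]
      have hg : (adj.unit.app H ≫ G.map k.f) ≫ rm.left
          = (adj.unit.app H ≫ G.map k.f) ≫ rm.right := by
        haveI := mono rm.Z
        rw [← cancel_mono (adj.unit.app rm.Z)]
        have h1 : rm.left ≫ adj.unit.app rm.Z
            = adj.unit.app (G.obj (F.obj H')) ≫ G.map (F.map rm.left) := by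
          simpa using adj.unit.naturality rm.left
        have h2 : rm.right ≫ adj.unit.app rm.Z
            = adj.unit.app (G.obj (F.obj H')) ≫ G.map (F.map rm.right) := by
          simpa using adj.unit.naturality rm.right
        have hcan' : adj.unit.app H ≫ G.map k.f ≫ adj.unit.app (G.obj (F.obj H'))
            = adj.unit.app H ≫ G.map k.f ≫ G.map (F.map (adj.unit.app H')) := by
          simpa [Category.assoc] using hcan.symm
        simp only [Category.assoc]
        rw [h1, h2]
        simp only [reassoc_of% hcan']
        simp only [← Functor.map_comp]
        rw [rm.w]
      obtain ⟨l, hl⟩ := Fork.IsLimit.lift' rm.isLimit (adj.unit.app H ≫ G.map k.f) hg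
      have hl' : l ≫ adj.unit.app H' = adj.unit.app H ≫ G.map k.f := hl
      refine ⟨l, ?_⟩
      apply Comonad.Coalgebra.Hom.ext
      haveI : IsSplitMono (F.map (adj.unit.app H')) :=
        ⟨⟨⟨adj.counit.app _, adj.left_triangle_components H'⟩⟩⟩
      simp only [Comonad.comparison_map_f]
      rw [← cancel_mono (F.map (adj.unit.app H')), ← F.map_comp, hl', F.map_comp, hk]
    · constructor
      intro X Y a b hab
      have hf : F.map a = F.map b := congrArg Comonad.Coalgebra.Hom.f hab
      haveI := mono Y
      rw [← cancel_mono (adj.unit.app Y)]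
      have h1 : a ≫ adj.unit.app Y = adj.unit.app X ≫ G.map (F.map a) := by
        simpa using adj.unit.naturality a
      have h2 : b ≫ adj.unit.app Y = adj.unit.app X ≫ G.map (F.map b) := by
        simpa using adj.unit.naturality b
      rw [h1, h2, hf]
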